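/- Let K ∈ ℕ, η > 0, E ∈ ℝ, g_j > 0 and γ_j > 0 for j = 1,…,K. Let V be the (K+1)×(K+1) complex Hermitian matrix with entries V_{00} = ((η/2)/(1 + (η/2)²)) E, V_{0j} = (η/2)/(2(1 + iη/2)) · g_j and V_{j0} = conjugate of V_{0j} for j = 1,…,K, V_{jj} = γ_j/2 for j = 1,…,K, and V_{jk} = 0 for distinct j,k ≥ 1. Then V is positive semidefinite if and only if E ≥ (η/4) Σ_{j=1}^K g_j²/γ_j. -/

import Mathlib

open Matrix
open scoped ComplexOrder

/-- The optical potential block `V_α`: the `(K+1)×(K+1)` Hermitian matrix with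
`V_00 = ((η/2)/(1+(η/2)²))E`, `V_{0j} = (η/2)/(2(1+iη/2))·g_j`, `V_{j0} = conj V_{0j}`,
`V_{jj} = γ_j/2`, and vanishing off-diagonal entries among the pseudomodes. -/
noncomputable def Vblock (K : ℕ) (η E : ℝ) (g γ : Fin K → ℝ) :
    Matrix (Unit ⊕ Fin K) (Unit ⊕ Fin K) ℂ :=
  Matrix.fromBlocks
    (fun _ _ => (((η / 2) / (1 + (η / 2) ^ 2) * E : ℝ) : ℂ))
    (fun _ j => (η / 2 : ℂ) / (2 * (1 + Complex.I * (η : ℂ) / 2)) * (g j : ℂ))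
    (fun j _ => (starRingEnd ℂ) ((η / 2 : ℂ) / (2 * (1 + Complex.I * (η : ℂ) / 2)) * (g j : ℂ)))
    (Matrix.diagonal fun j => ((γ j / 2 : ℝ) : ℂ))

lemma posSemidef_unit_iff (M : Matrix Unit Unit ℂ) : M.PosSemidef ↔ 0 ≤ M () () := by
  constructor
  · intro h
    have := (posSemidef_iff_dotProduct_mulVec.mp h).2 (fun _ => 1)
    simpa [Matrix.mulVec, dotProduct] using this
  · intro h
    have hre : (starRingEnd ℂ) (M () ()) = M () () := by
      rw [Complex.conj_eq_iff_im]
      exact ((Complex.nonneg_iff).mp h).2.symm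
    refine posSemidef_iff_dotProduct_mulVec.mpr ⟨?_, fun x => ?_⟩
    · ext i j
      exact hre
    · have : (star x) ⬝ᵥ (M *ᵥ x) = M () () * ((starRingEnd ℂ) (x ()) * x ()) := by
        simp [Matrix.mulVec, dotProduct]
        ring
      rw [this]
      exact mul_nonneg h (by simpa using star_mul_self_nonneg (x ()))

/-- The optical potential block `V` is positive semidefinite if and only if
`E ≥ (η/4) Σ_j g_j²/γ_j`. -/
theorem optical_potential_block_posSemidef_iff
    (K : ℕ) (η E : ℝ) (hη : 0 < η) (g γ : Fin K → ℝ)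
    (hg : ∀ j, 0 < g j) (hγ : ∀ j, 0 < γ j) :
    (Vblock K η E g γ).PosSemidef ↔ E ≥ (η / 4) * ∑ j, (g j) ^ 2 / (γ j) := by
  set c : ℂ := (η / 2 : ℂ) / (2 * (1 + Complex.I * (η : ℂ) / 2)) with hc
  set A : Matrix Unit Unit ℂ := fun _ _ => (((η / 2) / (1 + (η / 2) ^ 2) * E : ℝ) : ℂ) with hA
  set B : Matrix Unit (Fin K) ℂ := fun _ j => c * (g j : ℂ) with hB
  set D : Matrix (Fin K) (Fin K) ℂ := Matrix.diagonal fun j => ((γ j / 2 : ℝ) : ℂ) with hD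
  have hV : Vblock K η E g γ = Matrix.fromBlocks A B Bᴴ D := by
    rfl
  have hDpd : D.PosDef := by
    rw [hD, Matrix.posDef_diagonal_iff]
    intro i
    rw [Complex.zero_lt_real]
    exact div_pos (hγ i) two_pos
  haveI := hDpd.isUnit.invertible
  rw [hV, Matrix.PosDef.fromBlocks₂₂ A B hDpd, posSemidef_unit_iff]
  have hcc : c * (starRingEnd ℂ) c = (((η/2)^2 / (4 * (1 + (η/2)^2)) : ℝ) : ℂ) := by
    rw [hc, Complex.mul_conj]
    congr 1
    rw [map_div₀]
    have h1 : Complex.normSq ((η:ℂ)/2) = (η/2)^2 := by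
      simp [Complex.normSq_apply, Complex.div_re, Complex.div_im, Complex.normSq_ofNat]
      ring
    have h2 : Complex.normSq (2 * (1 + Complex.I * (η : ℂ) / 2)) = 4 * (1 + (η/2)^2) := by
      simp [Complex.normSq_apply, Complex.add_re, Complex.add_im, Complex.mul_re, Complex.mul_im,
        Complex.div_re, Complex.div_im, Complex.normSq_ofNat]
      ring
    rw [h1, h2]
  have hDinv : D⁻¹ = Matrix.diagonal (fun j => ((2 / γ j : ℝ) : ℂ)) := by
    apply Matrix.inv_eq_right_inv
    rw [hD, Matrix.diagonal_mul_diagonal]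
    have h1 : ∀ j, ((γ j : ℝ) : ℂ) / 2 * (2 / ((γ j : ℝ) : ℂ)) = 1 := by
      intro j
      have hj : ((γ j : ℝ) : ℂ) ≠ 0 := Complex.ofReal_ne_zero.mpr (hγ j).ne'
      field_simp
    simp [h1]
  have hent : (A - B * D⁻¹ * Bᴴ) () () =
      (((η/2)/(1+(η/2)^2) * (E - (η/4) * ∑ j, g j ^ 2 / γ j) : ℝ) : ℂ) := by
    have hsum : (B * D⁻¹ * Bᴴ) () () =
        ∑ j, c * (g j : ℂ) * ((2 / γ j : ℝ) : ℂ) * (starRingEnd ℂ) (c * (g j : ℂ)) := by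
      rw [hDinv, Matrix.mul_apply]
      refine Finset.sum_congr rfl fun j _ => ?_
      rw [Matrix.mul_diagonal, Matrix.conjTranspose_apply]
      rfl
    have hterm : ∀ j ∈ Finset.univ,
        c * (g j : ℂ) * ((2 / γ j : ℝ) : ℂ) * (starRingEnd ℂ) (c * (g j : ℂ))
          = (((η/2)^2 / (4 * (1 + (η/2)^2)) * (g j ^ 2 * (2 / γ j)) : ℝ) : ℂ) := by
      intro j _
      rw [_root_.map_mul, Complex.conj_ofReal]
      have : c * (g j : ℂ) * ((2 / γ j : ℝ) : ℂ) * ((starRingEnd ℂ) c * (g j : ℂ))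
          = (c * (starRingEnd ℂ) c) * ((g j : ℂ)^2 * ((2 / γ j : ℝ) : ℂ)) := by ring
      rw [this, hcc]
      push_cast
      ring
    rw [Matrix.sub_apply, hsum, Finset.sum_congr rfl hterm, hA]
    rw [← Complex.ofReal_sum, ← Complex.ofReal_sub, Complex.ofReal_inj]
    have hkey : (η/2)/(1+(η/2)^2) * ((η/4) * ∑ j, g j ^ 2 / γ j)
        = ∑ j, (η/2)^2 / (4 * (1 + (η/2)^2)) * (g j ^ 2 * (2 / γ j)) := by
      rw [Finset.mul_sum, Finset.mul_sum]
      refine Finset.sum_congr rfl fun j _ => ?_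
      have hj := (hγ j).ne'
      have hd : (1 + (η/2)^2) ≠ 0 := by positivity
      field_simp
    rw [mul_sub, hkey]
  have hk : 0 < (η/2)/(1+(η/2)^2) := by positivity
  rw [hent, Complex.zero_le_real, mul_nonneg_iff_of_pos_left hk, sub_nonneg, ge_iff_le]
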